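/- Let R be a commutative ring, A a commutative R-algebra, L an A-module with an R-bilinear antisymmetric bracket [·,·] satisfying the Jacobi identity, and ρ : L → Der_R(A) an A-linear map satisfying the Leibniz rule [s, f·t] = f·[s,t] + ρ(s)(f)·t and the homomorphism property ρ([s,t]) = ρ(s)∘ρ(t) − ρ(t)∘ρ(s). Define ᴱL_s := ι_s ∘ d + d ∘ ι_s on alternating forms, with d the Cartan-formula differential. Then the E-Lie derivative is a representation of the Lie algebra L on forms: for all s, t ∈ L, every p ≥ 0 and every alternating A-multilinear ω : L^p → A, (ᴱL_s(ᴱL_t ω) − ᴱL_t(ᴱL_s ω)) = ᴱL_{[s,t]} ω. -/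

import Mathlib

/-- A `p`-form: an alternating `A`-multilinear map `L^p → A`. -/
def IsAltForm {A L : Type*} [CommRing A] [AddCommGroup L] [Module A L]
    (p : ℕ) (ω : (Fin p → L) → A) : Prop :=
  (∀ (s : Fin p → L) (i : Fin p) (x y : L),
      ω (Function.update s i (x + y)) =
        ω (Function.update s i x) + ω (Function.update s i y)) ∧
  (∀ (s : Fin p → L) (i : Fin p) (f : A) (x : L),
      ω (Function.update s i (f • x)) = f * ω (Function.update s i x)) ∧
  (∀ (s : Fin p → L) (i j : Fin p), i ≠ j → s i = s j → ω s = 0)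

/-- The `p`-tuple `([sᵢ,sⱼ], …, ŝᵢ, …, ŝⱼ, …)` obtained from a `(p+1)`-tuple `s`
by removing the entries at positions `i < j` and prepending the bracket `[sᵢ, sⱼ]`. -/
def bracketTuple {L : Type*} (br : L → L → L) {p : ℕ} (i j : Fin (p + 1))
    (s : Fin (p + 1) → L) : Fin p → L :=
  fun k =>
    if (k : ℕ) = 0 then br (s i) (s j)
    else s ⟨if (k : ℕ) - 1 < (i : ℕ) then (k : ℕ) - 1
            else if (k : ℕ) < (j : ℕ) then (k : ℕ) else (k : ℕ) + 1, by
      have hk := k.isLt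
      split_ifs <;> omega⟩

/-- The Cartan-formula differential of a `p`-form:
`(dω)(s₁,…,s_{p+1}) = Σᵢ (−1)^{i+1} ρ(sᵢ)(ω(…,ŝᵢ,…))
  + Σ_{i<j} (−1)^{i+j} ω([sᵢ,sⱼ],…,ŝᵢ,…,ŝⱼ,…)` (written with 0-based indices,
so the signs read `(−1)^i` and `(−1)^{i+j}`). -/
def cartanD {R A L : Type*} [CommRing R] [CommRing A] [Algebra R A]
    [AddCommGroup L] [Module A L]
    (ρ : L → Derivation R A A) (br : L → L → L) (p : ℕ)
    (ω : (Fin p → L) → A) : (Fin (p + 1) → L) → A :=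
  fun s =>
    (∑ i : Fin (p + 1),
        (-1 : A) ^ (i : ℕ) * ρ (s i) (ω fun k => s (i.succAbove k)))
      + ∑ i : Fin (p + 1), ∑ j : Fin (p + 1),
          if (i : ℕ) < (j : ℕ) then
            (-1 : A) ^ ((i : ℕ) + (j : ℕ)) * ω (bracketTuple br i j s)
          else 0

/-- Contraction of a `(p+1)`-form in its first slot. -/
def contr {A L : Type*} {p : ℕ} (x : L)
    (ω : (Fin (p + 1) → L) → A) : (Fin p → L) → A :=
  fun t => ω (Fin.cons x t)

/-- The `E`-Lie derivative on `p`-forms, given by Cartan's magic formula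
`ᴱL_x = ι_x ∘ d + d ∘ ι_x` (for `p = 0` the contraction of a `0`-form is zero,
so only the first term remains). -/
def lieDer {R A L : Type*} [CommRing R] [CommRing A] [Algebra R A]
    [AddCommGroup L] [Module A L]
    (ρ : L → Derivation R A A) (br : L → L → L) (x : L) :
    (p : ℕ) → ((Fin p → L) → A) → (Fin p → L) → A
  | 0, ω => contr x (cartanD ρ br 0 ω)
  | (q + 1), ω => fun t =>
      contr x (cartanD ρ br (q + 1) ω) t + cartanD ρ br q (contr x ω) t

section auxiliary

variable {R A L : Type*} [CommRing R] [CommRing A] [Algebra R A]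
    [AddCommGroup L] [Module A L]

set_option linter.unusedSectionVars false
set_option linter.unreachableTactic false
set_option linter.unusedTactic false

/-- Package an `IsAltForm` as a Mathlib `AlternatingMap`. -/
def toAlt {p : ℕ} (ω : (Fin p → L) → A) (hω : IsAltForm p ω) :
    AlternatingMap A L A (Fin p) where
  toFun := ω
  map_update_add' := by
    intro inst m i x y
    have : inst = instDecidableEqFin p := Subsingleton.elim _ _
    subst this
    exact hω.1 m i x y
  map_update_smul' := by
    intro inst m i c x
    have : inst = instDecidableEqFin p := Subsingleton.elim _ _
    subst this
    rw [smul_eq_mul]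
    exact hω.2.1 m i c x
  map_eq_zero_of_eq' := fun v i j h hne => hω.2.2 v i j hne h

lemma toAlt_coe {p : ℕ} (ω : (Fin p → L) → A) (hω : IsAltForm p ω) :
    ⇑(toAlt ω hω) = ω := rfl

lemma alt_swap {p : ℕ} {ω : (Fin p → L) → A} (hω : IsAltForm p ω)
    {i j : Fin p} (hij : i ≠ j) (v : Fin p → L) :
    ω (v ∘ Equiv.swap i j) = - ω v :=
  (toAlt ω hω).map_swap v hij

lemma alt_sub {p : ℕ} {ω : (Fin p → L) → A} (hω : IsAltForm p ω)
    (u : Fin p → L) (i : Fin p) (x y : L) :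
    ω (Function.update u i (x - y)) =
      ω (Function.update u i x) - ω (Function.update u i y) := by
  exact (toAlt ω hω).toMultilinearMap.map_update_sub u i x y

lemma alt_move {q : ℕ} {ω : (Fin (q+1) → L) → A} (hω : IsAltForm (q+1) ω)
    (u : Fin (q+1) → L) (l : Fin (q+1)) (x : L) :
    ω (Fin.cons x (fun k => u (l.succAbove k))) =
      (-1 : A) ^ (l : ℕ) * ω (Function.update u l x) := by
  have key : (Fin.cons x (fun k => u (l.succAbove k)) : Fin (q+1) → L)
      = (Function.update u l x) ∘ ⇑(l.cycleRange.symm) := by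
    funext m
    rcases Fin.eq_zero_or_eq_succ m with rfl | ⟨j, rfl⟩
    · rw [Function.comp_apply, Fin.cycleRange_symm_zero, Function.update_self, Fin.cons_zero]
    · rw [Function.comp_apply, Fin.cycleRange_symm_succ,
        Function.update_of_ne (l.succAbove_ne j), Fin.cons_succ]
  have hperm := (toAlt ω hω).map_perm (Function.update u l x) l.cycleRange.symm
  rw [toAlt_coe] at hperm
  rw [key, hperm]
  have hs : Equiv.Perm.sign (l.cycleRange.symm) = (-1 : ℤˣ) ^ (l : ℕ) := by
    simp [Fin.sign_cycleRange]
  rw [hs]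
  rcases Nat.even_or_odd (l : ℕ) with he | ho
  · rw [he.neg_one_pow, (Even.neg_one_pow he : (-1:A)^(l:ℕ) = 1)]
    simp
  · rw [ho.neg_one_pow, (Odd.neg_one_pow ho : (-1:A)^(l:ℕ) = -1)]
    simp

lemma cons_eval {α : Type*} {n : ℕ} (x : α) (w : Fin n → α) (k : Fin (n+1)) :
    (Fin.cons x w : Fin (n+1) → α) k = if h : (k:ℕ) = 0 then x else w ⟨(k:ℕ)-1, by omega⟩ := by
  rcases k with ⟨_|a, hk⟩ <;> rfl

lemma succAbove_val {n : ℕ} (l : Fin (n+1)) (k : Fin n) :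
    ((l.succAbove k : Fin (n+1)) : ℕ) = if (k:ℕ) < (l:ℕ) then (k:ℕ) else (k:ℕ)+1 := by
  rw [Fin.succAbove]
  split_ifs with h1 h2 h2 <;> simp_all [Fin.lt_def]

lemma tup1 {q : ℕ} (s : L) (u : Fin (q+1) → L) :
    (fun k => (Fin.cons s u : Fin (q+2) → L) ((0 : Fin (q+2)).succAbove k)) = u := by
  funext k
  rw [Fin.succAbove_zero, Fin.cons_succ]

lemma tup3 {q : ℕ} (s : L) (u : Fin (q+1) → L) (k : Fin (q+1)) :
    (fun m => (Fin.cons s u : Fin (q+2) → L) (k.succ.succAbove m))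
      = Fin.cons s (fun m => u (k.succAbove m)) := by
  funext m
  rcases Fin.eq_zero_or_eq_succ m with rfl | ⟨j, rfl⟩
  · rw [Fin.cons_zero, cons_eval,
      dif_pos (by rw [succAbove_val]; simp [Fin.val_succ])]
  · rw [Fin.cons_succ, cons_eval,
      dif_neg (by rw [succAbove_val, Fin.val_succ, Fin.val_succ]
                  split_ifs <;> first | exact not_false | omega)]
    congr 1
    apply Fin.ext
    simp only [succAbove_val, Fin.val_succ]
    split_ifs <;> omega

lemma tup4 {q : ℕ} (br : L → L → L) (s : L) (u : Fin (q+1) → L) (l : Fin (q+1)) :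
    bracketTuple br 0 l.succ (Fin.cons s u)
      = Fin.cons (br s (u l)) (fun m => u (l.succAbove m)) := by
  funext r
  rw [cons_eval]
  simp only [bracketTuple, Fin.cons_zero, Fin.cons_succ]
  by_cases h0 : (r : ℕ) = 0
  · rw [if_pos h0, dif_pos h0]
  · rw [if_neg h0, dif_neg h0]
    have hr := r.isLt
    rw [cons_eval]
    rw [dif_neg (by
      simp only [Fin.val_zero, Fin.val_succ, Nat.not_lt_zero, if_false]
      split_ifs <;> first | exact not_false | omega)]
    congr 1
    apply Fin.ext
    simp only [succAbove_val, Fin.val_zero, Fin.val_succ, Nat.not_lt_zero, if_false]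
    split_ifs <;> omega

lemma tup5 {q : ℕ} (br : L → L → L) (s : L) (u : Fin (q+1) → L) (k m : Fin (q+1))
    (hkm : (k:ℕ) < (m:ℕ)) :
    bracketTuple br k.succ m.succ (Fin.cons s u)
      = (Fin.cons s (bracketTuple br k m u)) ∘ Equiv.swap 0 1 := by
  have hq : 1 ≤ q := by have := m.isLt; omega
  have h1v : ((1 : Fin (q+1)) : ℕ) = 1 := by
    rw [Fin.val_one']; exact Nat.mod_eq_of_lt (by omega)
  funext r
  have hr := r.isLt
  have hsw : ((Equiv.swap (0 : Fin (q+1)) 1 r : Fin (q+1)) : ℕ)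
      = if (r:ℕ) = 0 then 1 else if (r:ℕ) = 1 then 0 else (r:ℕ) := by
    by_cases a : r = 0
    · subst a
      rw [Equiv.swap_apply_left, if_pos (Fin.val_zero _), h1v]
    · by_cases b : r = 1
      · subst b
        rw [Equiv.swap_apply_right, if_neg (by rw [h1v]; omega), if_pos h1v, Fin.val_zero]
      · rw [Equiv.swap_apply_of_ne_of_ne a b,
          if_neg (fun h => a (Fin.ext (by rw [h, Fin.val_zero]))),
          if_neg (fun h => b (Fin.ext (by rw [h, h1v])))]
  rw [Function.comp_apply, cons_eval (k := Equiv.swap 0 1 r)]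
  simp only [bracketTuple, Fin.cons_succ]
  by_cases h0 : (r:ℕ) = 0
  · rw [if_pos h0, dif_neg (by rw [hsw, if_pos h0]; omega)]
    rw [if_pos (by simp only [hsw, if_pos h0])]
  · rw [if_neg h0]
    by_cases h1 : (r:ℕ) = 1
    · rw [dif_pos (by rw [hsw, if_neg h0, if_pos h1])]
      rw [cons_eval]
      rw [dif_pos (by simp only [Fin.val_succ, h1]; rw [if_pos (by omega)])]
    · rw [dif_neg (by rw [hsw, if_neg h0, if_neg h1]; exact h0)]
      have hswr : ((Equiv.swap (0 : Fin (q+1)) 1 r : Fin (q+1)) : ℕ) = (r:ℕ) := by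
        rw [hsw, if_neg h0, if_neg h1]
      simp only [hswr]
      rw [if_neg (show ¬((r:ℕ) - 1 = 0) by omega)]
      rw [cons_eval]
      rw [dif_neg (by
        simp only [Fin.val_succ]
        split_ifs <;> first | exact not_false | omega)]
      congr 1
      apply Fin.ext
      simp only [Fin.val_succ]
      split_ifs <;> omega

end auxiliary

section main

variable {R A L : Type*} [CommRing R] [CommRing A] [Algebra R A]
    [AddCommGroup L] [Module A L]

/-- The standard formula for the Lie derivative. -/
theorem lieDer_eq (ρ : L → Derivation R A A) (br : L → L → L) (s : L)
    {p : ℕ} {ω : (Fin p → L) → A} (hω : IsAltForm p ω) (u : Fin p → L) :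
    lieDer ρ br s p ω u
      = ρ s (ω u) - ∑ i : Fin p, ω (Function.update u i (br s (u i))) := by
  cases p with
  | zero =>
    show cartanD ρ br 0 ω (Fin.cons s u) = _
    unfold cartanD
    rw [Fin.sum_univ_one, Fin.sum_univ_one, Fin.sum_univ_one]
    have harg : (fun k : Fin 0 => (Fin.cons s u : Fin 1 → L) ((0:Fin 1).succAbove k)) = u :=
      funext fun k => k.elim0
    rw [harg, Fin.cons_zero]
    simp
  | succ q =>
    show cartanD ρ br (q+1) ω (Fin.cons s u) + cartanD ρ br q (contr s ω) u = _
    set S1 : A := ∑ k : Fin (q+1),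
      (-1:A)^(k:ℕ) * ρ (u k) (ω (Fin.cons s (fun m => u (k.succAbove m)))) with hS1
    set S2 : A := ∑ l : Fin (q+1), ω (Function.update u l (br s (u l))) with hS2
    set S3 : A := ∑ k : Fin (q+1), ∑ m : Fin (q+1),
      (if (k:ℕ) < (m:ℕ) then (-1:A)^((k:ℕ)+(m:ℕ)) * ω (Fin.cons s (bracketTuple br k m u))
       else 0) with hS3
    have hB : cartanD ρ br q (contr s ω) u = S1 + S3 := rfl
    have hA : cartanD ρ br (q+1) ω (Fin.cons s u) = ρ s (ω u) - S1 - S2 - S3 := by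
      unfold cartanD
      rw [Fin.sum_univ_succ]
      rw [Fin.sum_univ_succ
        (f := fun i : Fin (q+2) => ∑ j : Fin (q+2),
          if (i:ℕ) < (j:ℕ) then
            (-1:A)^((i:ℕ)+(j:ℕ)) * ω (bracketTuple br i j (Fin.cons s u)) else 0)]
      rw [tup1, Fin.cons_zero, Fin.val_zero, pow_zero, one_mul]
      have h2 : ∑ k : Fin (q+1),
          (-1:A)^((k.succ : Fin (q+2)) : ℕ) * ρ ((Fin.cons s u : Fin (q+2) → L) k.succ)
            (ω (fun m => (Fin.cons s u : Fin (q+2) → L) (k.succ.succAbove m))) = -S1 := by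
        rw [hS1, ← Finset.sum_neg_distrib]
        refine Finset.sum_congr rfl fun k _ => ?_
        rw [Fin.val_succ, pow_succ, Fin.cons_succ, tup3]
        ring
      have h3 : (∑ j : Fin (q+2),
          if 0 < (j:ℕ) then
            (-1:A)^(0+(j:ℕ)) * ω (bracketTuple br 0 j (Fin.cons s u))
          else 0) = -S2 := by
        rw [Fin.sum_univ_succ, if_neg (by simp)]
        rw [hS2, ← Finset.sum_neg_distrib, zero_add]
        refine Finset.sum_congr rfl fun l _ => ?_
        rw [if_pos (by simp [Fin.val_succ]), tup4, alt_move hω, Fin.val_succ]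
        have : (-1:A)^(0+((l:ℕ)+1)) * ((-1:A)^(l:ℕ) * ω (Function.update u l (br s (u l))))
            = ((-1:A)^(2*(l:ℕ)+1)) * ω (Function.update u l (br s (u l))) := by
          rw [← mul_assoc, ← pow_add]
          congr 2
          omega
        rw [this, Odd.neg_one_pow ⟨(l:ℕ), by omega⟩]
        ring
      have h4 : ∑ k : Fin (q+1), (∑ j : Fin (q+2),
          if ((k.succ : Fin (q+2)) : ℕ) < (j:ℕ) then
            (-1:A)^(((k.succ : Fin (q+2)):ℕ)+(j:ℕ)) * ω (bracketTuple br k.succ j (Fin.cons s u))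
          else 0) = -S3 := by
        rw [hS3, ← Finset.sum_neg_distrib]
        refine Finset.sum_congr rfl fun k _ => ?_
        rw [Fin.sum_univ_succ, if_neg (by simp), zero_add, ← Finset.sum_neg_distrib]
        refine Finset.sum_congr rfl fun m _ => ?_
        by_cases hkm : (k:ℕ) < (m:ℕ)
        · rw [if_pos (by simp only [Fin.val_succ]; omega),
            if_pos hkm]
          have hq : 1 ≤ q := by have := m.isLt; omega
          have h01 : (0 : Fin (q+1)) ≠ 1 := by
            intro h
            have h1v : ((1 : Fin (q+1)) : ℕ) = 1 := by
              rw [Fin.val_one']; exact Nat.mod_eq_of_lt (by omega)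
            have := congrArg Fin.val h
            rw [Fin.val_zero, h1v] at this
            omega
          rw [tup5 br s u k m hkm, alt_swap hω h01]
          have hpow : (-1:A)^(((k:ℕ)+1)+((m:ℕ)+1)) = (-1:A)^((k:ℕ)+(m:ℕ)) := by
            rw [show ((k:ℕ)+1)+((m:ℕ)+1) = ((k:ℕ)+(m:ℕ))+2 by omega, pow_add]
            norm_num
          rw [Fin.val_succ, Fin.val_succ, hpow]
          ring
        · rw [if_neg (by simp only [Fin.val_succ]; omega), if_neg hkm, neg_zero]
      rw [h2, h3, h4]
      ring
    rw [hA, hB]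
    ring

/-- The Lie-derivative formula preserves alternating forms. -/
theorem phi_isAltForm (ρ : L → Derivation R A A) (br : L → L → L) (s : L)
    (hbr_add_right : ∀ s t u : L, br s (t + u) = br s t + br s u)
    (hleibniz : ∀ (s t : L) (f : A), br s (f • t) = f • br s t + (ρ s f) • t)
    {p : ℕ} {ω : (Fin p → L) → A} (hω : IsAltForm p ω) :
    IsAltForm p (fun u => ρ s (ω u) - ∑ i : Fin p, ω (Function.update u i (br s (u i)))) := by
  refine ⟨?_, ?_, ?_⟩
  · intro u j x y
    dsimp only
    have hterm : ∀ i : Fin p,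
        ω (Function.update (Function.update u j (x+y)) i
            (br s (Function.update u j (x+y) i)))
        = ω (Function.update (Function.update u j x) i
            (br s (Function.update u j x i)))
          + ω (Function.update (Function.update u j y) i
            (br s (Function.update u j y i))) := by
      intro i
      by_cases hij : i = j
      · rw [hij]
        simp only [Function.update_idem, Function.update_self]
        rw [hbr_add_right, hω.1]
      · rw [Function.update_of_ne hij (x+y) u, Function.update_of_ne hij x u,
          Function.update_of_ne hij y u,
          Function.update_comm (Ne.symm hij) (x+y) (br s (u i)) u,
          Function.update_comm (Ne.symm hij) x (br s (u i)) u,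
          Function.update_comm (Ne.symm hij) y (br s (u i)) u,
          hω.1]
    rw [hω.1]
    simp only [hterm]
    rw [Finset.sum_add_distrib, map_add]
    ring
  · intro u j f x
    dsimp only
    have hterm : ∀ i : Fin p,
        ω (Function.update (Function.update u j (f • x)) i
            (br s (Function.update u j (f • x) i)))
        = f * ω (Function.update (Function.update u j x) i
            (br s (Function.update u j x i)))
          + (if i = j then ρ s f * ω (Function.update u j x) else 0) := by
      intro i
      by_cases hij : i = j
      · rw [if_pos hij, hij]
        simp only [Function.update_idem, Function.update_self]
        rw [hleibniz, hω.1, hω.2.1, hω.2.1]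
      · rw [if_neg hij, add_zero, Function.update_of_ne hij (f • x) u,
          Function.update_of_ne hij x u,
          Function.update_comm (Ne.symm hij) (f • x) (br s (u i)) u,
          Function.update_comm (Ne.symm hij) x (br s (u i)) u,
          hω.2.1]
    rw [hω.2.1, Derivation.leibniz]
    simp only [hterm]
    rw [Finset.sum_add_distrib, Finset.sum_ite_eq' Finset.univ j
      (fun _ => ρ s f * ω (Function.update u j x)), if_pos (Finset.mem_univ j),
      ← Finset.mul_sum, smul_eq_mul, smul_eq_mul]
    ring
  · intro u i0 j0 hne heq
    dsimp only
    rw [hω.2.2 u i0 j0 hne heq, map_zero]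
    have hterm : ∀ i : Fin p,
        ω (Function.update u i (br s (u i)))
        = (if i = i0 then ω (Function.update u i0 (br s (u i0))) else 0)
          + (if i = j0 then -ω (Function.update u i0 (br s (u i0))) else 0) := by
      intro i
      by_cases h1 : i = i0
      · rw [h1, if_pos rfl, if_neg hne, add_zero]
      · by_cases h2 : i = j0
        · rw [if_neg h1, if_pos h2, zero_add, h2]
          have hsw2 : Function.update u j0 (br s (u j0))
              = (Function.update u i0 (br s (u i0))) ∘ Equiv.swap i0 j0 := by
            funext r
            rw [Function.comp_apply, Equiv.swap_apply_def]
            by_cases a : r = i0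
            · rw [if_pos a, a, Function.update_of_ne hne (br s (u j0)) u,
                Function.update_of_ne (Ne.symm hne) (br s (u i0)) u]
              exact heq
            · by_cases b : r = j0
              · rw [if_neg a, if_pos b, b, Function.update_self, Function.update_self, heq]
              · rw [if_neg a, if_neg b, Function.update_of_ne b (br s (u j0)) u,
                  Function.update_of_ne a (br s (u i0)) u]
          rw [hsw2, alt_swap hω hne]
        · rw [if_neg h1, if_neg h2, add_zero]
          refine hω.2.2 _ i0 j0 hne ?_
          rw [Function.update_of_ne (fun h => h1 h.symm) (br s (u i)) u,
            Function.update_of_ne (fun h => h2 h.symm) (br s (u i)) u]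
          exact heq
    rw [Finset.sum_congr rfl (fun i _ => hterm i), Finset.sum_add_distrib,
      Finset.sum_ite_eq' Finset.univ i0
        (fun _ => ω (Function.update u i0 (br s (u i0)))),
      Finset.sum_ite_eq' Finset.univ j0
        (fun _ => -ω (Function.update u i0 (br s (u i0)))),
      if_pos (Finset.mem_univ i0), if_pos (Finset.mem_univ j0)]
    ring

end main

/-- For a Lie–Rinehart algebra `(A, L, ρ)` over `R` (Jacobi identity
and anchor homomorphism property included), the `E`-Lie derivative is a representation
of `L` on forms: `ᴱL_s ∘ ᴱL_t − ᴱL_t ∘ ᴱL_s = ᴱL_{[s,t]}` on every alternating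
`A`-multilinear `p`-form. -/
theorem lie_derivative_is_representation
    {R A L : Type*} [CommRing R] [CommRing A] [Algebra R A]
    [AddCommGroup L] [Module R L] [Module A L] [IsScalarTower R A L]
    (br : L → L → L) (ρ : L → Derivation R A A)
    -- the bracket is R-bilinear
    (hbr_add_left : ∀ s t u : L, br (s + t) u = br s u + br t u)
    (hbr_add_right : ∀ s t u : L, br s (t + u) = br s t + br s u)
    (hbr_smul_left : ∀ (r : R) (s t : L), br (r • s) t = r • br s t)
    (hbr_smul_right : ∀ (r : R) (s t : L), br s (r • t) = r • br s t)
    -- antisymmetry and the Jacobi identity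
    (hbr_anti : ∀ s t : L, br s t = - br t s)
    (hbr_jacobi : ∀ s t u : L, br s (br t u) + br t (br u s) + br u (br s t) = 0)
    -- the anchor is A-linear
    (hρ_add : ∀ s t : L, ρ (s + t) = ρ s + ρ t)
    (hρ_smul : ∀ (f : A) (s : L), ρ (f • s) = f • ρ s)
    -- the Leibniz rule
    (hleibniz : ∀ (s t : L) (f : A), br s (f • t) = f • br s t + (ρ s f) • t)
    -- the anchor is a homomorphism onto commutators of derivations
    (hρ_hom : ∀ (s t : L) (f : A), ρ (br s t) f = ρ s (ρ t f) - ρ t (ρ s f))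
    (s t : L) (p : ℕ) (ω : (Fin p → L) → A) (hω : IsAltForm p ω) :
    ∀ u : Fin p → L,
      lieDer ρ br s p (lieDer ρ br t p ω) u - lieDer ρ br t p (lieDer ρ br s p ω) u =
        lieDer ρ br (br s t) p ω u := by
  intro u
  -- negation of the bracket
  have hbr_zero : ∀ a : L, br a 0 = 0 := by
    intro a
    have h := hbr_add_right a 0 0
    rw [add_zero] at h
    exact add_eq_left.mp h.symm
  have hbr_neg : ∀ a v : L, br a (-v) = - br a v := by
    intro a v
    have h := hbr_add_right a v (-v)
    rw [add_neg_cancel, hbr_zero] at h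
    exact (neg_eq_of_add_eq_zero_right h.symm).symm
  -- rewrite the three Lie derivatives by the standard formula
  have e1 : lieDer ρ br s p (lieDer ρ br t p ω) u
      = ρ s (ρ t (ω u) - ∑ i : Fin p, ω (Function.update u i (br t (u i))))
        - ∑ i : Fin p, (ρ t (ω (Function.update u i (br s (u i))))
            - ∑ j : Fin p, ω (Function.update (Function.update u i (br s (u i))) j
                (br t (Function.update u i (br s (u i)) j)))) := by
    rw [show lieDer ρ br t p ω
        = (fun w => ρ t (ω w) - ∑ j : Fin p, ω (Function.update w j (br t (w j))))
      from funext (lieDer_eq ρ br t hω)]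
    exact lieDer_eq ρ br s (phi_isAltForm ρ br t hbr_add_right hleibniz hω) u
  have e2 : lieDer ρ br t p (lieDer ρ br s p ω) u
      = ρ t (ρ s (ω u) - ∑ i : Fin p, ω (Function.update u i (br s (u i))))
        - ∑ i : Fin p, (ρ s (ω (Function.update u i (br t (u i))))
            - ∑ j : Fin p, ω (Function.update (Function.update u i (br t (u i))) j
                (br s (Function.update u i (br t (u i)) j)))) := by
    rw [show lieDer ρ br s p ω
        = (fun w => ρ s (ω w) - ∑ j : Fin p, ω (Function.update w j (br s (w j))))
      from funext (lieDer_eq ρ br s hω)]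
    exact lieDer_eq ρ br t (phi_isAltForm ρ br s hbr_add_right hleibniz hω) u
  have e3 : lieDer ρ br (br s t) p ω u
      = ρ (br s t) (ω u) - ∑ i : Fin p, ω (Function.update u i (br (br s t) (u i))) :=
    lieDer_eq ρ br (br s t) hω u
  rw [e1, e2, e3]
  -- split the double sums into diagonal and off-diagonal parts
  have hsplit : ∀ a b : L,
      (∑ i : Fin p, ∑ j : Fin p, ω (Function.update (Function.update u i (br a (u i))) j
          (br b (Function.update u i (br a (u i)) j))))
      = (∑ i : Fin p, ω (Function.update u i (br b (br a (u i)))))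
        + ∑ i : Fin p, ∑ j : Fin p,
            (if j = i then 0
             else ω (Function.update (Function.update u i (br a (u i))) j (br b (u j)))) := by
    intro a b
    rw [← Finset.sum_add_distrib]
    refine Finset.sum_congr rfl fun i _ => ?_
    have hterm : ∀ j : Fin p,
        ω (Function.update (Function.update u i (br a (u i))) j
            (br b (Function.update u i (br a (u i)) j)))
        = (if j = i then ω (Function.update u i (br b (br a (u i)))) else 0)
          + (if j = i then 0
             else ω (Function.update (Function.update u i (br a (u i))) j (br b (u j)))) := by
      intro j
      by_cases h : j = i
      · subst h
        rw [if_pos rfl, if_pos rfl, add_zero, Function.update_self, Function.update_idem]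
      · rw [if_neg h, if_neg h, zero_add, Function.update_of_ne h]
    rw [Finset.sum_congr rfl fun j _ => hterm j, Finset.sum_add_distrib,
      Finset.sum_ite_eq' Finset.univ i
        (fun _ => ω (Function.update u i (br b (br a (u i))))),
      if_pos (Finset.mem_univ i)]
  -- the off-diagonal parts are symmetric in `s` and `t`
  have hswap : (∑ i : Fin p, ∑ j : Fin p,
        (if j = i then 0
         else ω (Function.update (Function.update u i (br s (u i))) j (br t (u j)))))
      = ∑ i : Fin p, ∑ j : Fin p,
        (if j = i then 0
         else ω (Function.update (Function.update u i (br t (u i))) j (br s (u j)))) := by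
    rw [Finset.sum_comm]
    refine Finset.sum_congr rfl fun i _ => Finset.sum_congr rfl fun j _ => ?_
    by_cases h : i = j
    · rw [if_pos h, if_pos h.symm]
    · rw [if_neg h, if_neg (Ne.symm h),
        Function.update_comm (Ne.symm h) (br s (u j)) (br t (u i)) u]
  -- the diagonal parts combine via the Jacobi identity
  have hjac : (∑ i : Fin p, ω (Function.update u i (br t (br s (u i)))))
      - (∑ i : Fin p, ω (Function.update u i (br s (br t (u i)))))
      = - ∑ i : Fin p, ω (Function.update u i (br (br s t) (u i))) := by
    rw [← Finset.sum_sub_distrib, ← Finset.sum_neg_distrib]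
    refine Finset.sum_congr rfl fun i _ => ?_
    rw [← alt_sub hω]
    have hx : br t (br s (u i)) - br s (br t (u i)) = - br (br s t) (u i) := by
      have hj := hbr_jacobi s t (u i)
      rw [show br t (br (u i) s) = - br t (br s (u i)) from by
          rw [hbr_anti (u i) s, hbr_neg],
        show br (u i) (br s t) = - br (br s t) (u i) from hbr_anti (u i) (br s t)] at hj
      rw [add_assoc] at hj
      have hj2 := add_eq_zero_iff_eq_neg.mp hj
      rw [neg_add, neg_neg, neg_neg] at hj2
      rw [hj2]
      abel
    rw [hx]
    exact (toAlt ω hω).toMultilinearMap.map_update_neg u i (br (br s t) (u i))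
  -- now everything is a ring computation
  rw [Finset.sum_sub_distrib, Finset.sum_sub_distrib, hsplit s t, hsplit t s, hswap,
    Derivation.map_sub, Derivation.map_sub, map_sum, map_sum, hρ_hom s t (ω u)]
  linear_combination hjac
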